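/- arXiv:0805.1488 — 6 statements merged into one kernel-verified Lean document; each statement's English description precedes it below -/
import Mathlib

section
/- Let A be a C*-algebra, H a Hilbert space, ρ : A → B(H) a *-representation, and Λ : D → L a linear map from a dense left ideal D ⊆ A into a Hilbert space L satisfying ‖Λ(x)‖² = φ(x* x) for a weight φ. A vector α ∈ H is 'bounded' (there is r > 0 with ‖ρ(x)α‖² ≤ r‖Λ(x)‖² for all x ∈ D) if and only if it is 'square-integrable' (for every β ∈ H there is r_β > 0 with |⟨β, ρ(x)α⟩|² ≤ r_β ‖Λ(x)‖² for all x ∈ D). -/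
set_option maxHeartbeats 1000000
set_option synthInstance.maxHeartbeats 400000

/-- Let `ρ : A → B(H)` be a *-representation of a C*-algebra, `D ⊆ A` a dense left ideal,
`Λ : D → L` a linear map into a Hilbert space.  A vector `α ∈ H` is bounded
(`∃ r > 0, ‖ρ(x)α‖² ≤ r ‖Λ x‖²` for all `x ∈ D`) if and only if it is square-integrable
(for every `β ∈ H` there is `r_β > 0` with `|⟪β, ρ(x)α⟫|² ≤ r_β ‖Λ x‖²` for all `x ∈ D`). -/
theorem stmt1 {A : Type*} [NormedRing A] [StarRing A] [CStarRing A]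
    [NormedAlgebra ℂ A] [StarModule ℂ A] [CompleteSpace A]
    {H : Type*} [NormedAddCommGroup H] [InnerProductSpace ℂ H] [CompleteSpace H]
    {L : Type*} [NormedAddCommGroup L] [InnerProductSpace ℂ L] [CompleteSpace L]
    (ρ : A →⋆ₐ[ℂ] (H →L[ℂ] H))
    (D : Submodule ℂ A) (hDdense : Dense (D : Set A))
    (hDideal : ∀ a : A, ∀ x ∈ D, a * x ∈ D)
    (Λ : D →ₗ[ℂ] L) (hΛdense : DenseRange Λ)
    (α : H) :
    (∃ r : ℝ, 0 < r ∧ ∀ x : D, ‖ρ (x : A) α‖ ^ 2 ≤ r * ‖Λ x‖ ^ 2) ↔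
      (∀ β : H, ∃ r : ℝ, 0 < r ∧
        ∀ x : D, ‖(inner ℂ β (ρ (x : A) α) : ℂ)‖ ^ 2 ≤ r * ‖Λ x‖ ^ 2) := by
  constructor
  · rintro ⟨r, hr, hb⟩ β
    refine ⟨r * (‖β‖ ^ 2 + 1), by positivity, fun x => ?_⟩
    have h1 : ‖(inner ℂ β (ρ (x : A) α) : ℂ)‖ ≤ ‖β‖ * ‖ρ (x : A) α‖ :=
      norm_inner_le_norm _ _
    have h2 := hb x
    have h3 : (0:ℝ) ≤ ‖(inner ℂ β (ρ (x : A) α) : ℂ)‖ := norm_nonneg _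
    have h4 : (0:ℝ) ≤ ‖β‖ := norm_nonneg _
    have h5 : (0:ℝ) ≤ ‖Λ x‖ ^ 2 := sq_nonneg _
    nlinarith [sq_nonneg (‖ρ (x : A) α‖)]
  · intro h
    -- If Λ x = 0 then ρ x α = 0
    have hker : ∀ x : D, Λ x = 0 → ρ (x : A) α = 0 := by
      intro x hx
      obtain ⟨r, hr, hb⟩ := h (ρ (x : A) α)
      have h1 := hb x
      rw [hx] at h1
      simp only [norm_zero] at h1
      have h2 : ‖(inner ℂ (ρ (x : A) α) (ρ (x : A) α) : ℂ)‖ = ‖ρ (x : A) α‖ ^ 2 := by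
        rw [inner_self_eq_norm_sq_to_K]
        simp [norm_pow]
      rw [h2] at h1
      by_contra hne
      have ha : 0 < ‖ρ (x : A) α‖ := norm_pos_iff.mpr hne
      nlinarith [pow_pos (pow_pos ha 2) 2]
    -- Banach–Steinhaus on the family of functionals
    set g : {x : D // Λ x ≠ 0} → (H →L[ℂ] ℂ) :=
      fun x => (‖Λ (x : D)‖)⁻¹ • innerSL ℂ (ρ ((x : D) : A) α) with hg
    have hpt : ∀ β : H, ∃ C : ℝ, ∀ i, ‖g i β‖ ≤ C := by
      intro β
      obtain ⟨r, hr, hb⟩ := h β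
      refine ⟨Real.sqrt r, fun i => ?_⟩
      have hΛpos : (0:ℝ) < ‖Λ (i : D)‖ := norm_pos_iff.mpr i.2
      have h1 := hb (i : D)
      have hsymm : ‖(inner ℂ (ρ ((i : D) : A) α) β : ℂ)‖
          = ‖(inner ℂ β (ρ ((i : D) : A) α) : ℂ)‖ := norm_inner_symm _ _
      have h2 : ‖g i β‖ = (‖Λ (i : D)‖)⁻¹ * ‖(inner ℂ β (ρ ((i : D) : A) α) : ℂ)‖ := by
        simp [hg, norm_smul, hsymm]
      rw [h2]
      rw [inv_mul_le_iff₀ hΛpos]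
      have hsq : Real.sqrt r * ‖Λ (i : D)‖ ≥ 0 := by positivity
      nlinarith [Real.sq_sqrt hr.le, norm_nonneg (inner ℂ β (ρ ((i : D) : A) α) : ℂ),
        sq_nonneg (Real.sqrt r * ‖Λ (i : D)‖ - ‖(inner ℂ β (ρ ((i : D) : A) α) : ℂ)‖)]
    obtain ⟨C, hC⟩ := banach_steinhaus hpt
    refine ⟨C ^ 2 + 1, by positivity, fun x => ?_⟩
    by_cases hx : Λ x = 0
    · rw [hker x hx, hx]
      simp
    · have hΛpos : (0:ℝ) < ‖Λ x‖ := norm_pos_iff.mpr hx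
      have h1 := hC ⟨x, hx⟩
      have hC0 : 0 ≤ C := le_trans (norm_nonneg _) h1
      have hv : ‖(inner ℂ (ρ (x : A) α) (ρ (x : A) α) : ℂ)‖ = ‖ρ (x : A) α‖ ^ 2 := by
        rw [inner_self_eq_norm_sq_to_K]
        simp [norm_pow]
      have h2 : ‖g ⟨x, hx⟩ (ρ (x : A) α)‖ = (‖Λ x‖)⁻¹ * ‖ρ (x : A) α‖ ^ 2 := by
        simp [hg, norm_smul, hv]
      have h3 := (g ⟨x, hx⟩).le_opNorm (ρ (x : A) α)
      rw [h2] at h3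
      have h4 : (‖Λ x‖)⁻¹ * ‖ρ (x : A) α‖ ^ 2 ≤ C * ‖ρ (x : A) α‖ :=
        le_trans h3 (mul_le_mul_of_nonneg_right h1 (norm_nonneg _))
      rw [inv_mul_le_iff₀ hΛpos] at h4
      nlinarith [sq_nonneg (‖ρ (x : A) α‖ - C * ‖Λ x‖), sq_nonneg ‖Λ x‖,
        norm_nonneg (ρ (x : A) α)]
end

section
/- Let G be a compact group with normalized Haar measure, and let π : G → U(H), π' : G → U(H') be irreducible unitary representations on finite-dimensional Hilbert spaces that are not equivalent. Then for all α, β ∈ H and γ, δ ∈ H', the matrix coefficients are orthogonal in L²(G): ∫_G ⟨π(g)α, β⟩ · conj(⟨π'(g)γ, δ⟩) dg = 0. -/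
open MeasureTheory

/-- First Schur orthogonality relation: matrix coefficients of two inequivalent irreducible
finite-dimensional unitary representations of a compact group are orthogonal in `L²(G)`
with respect to the normalized Haar measure. -/
theorem stmt5 {G : Type*} [Group G] [TopologicalSpace G] [IsTopologicalGroup G]
    [CompactSpace G] [MeasurableSpace G] [BorelSpace G]
    (μ : Measure G) [μ.IsHaarMeasure] [IsProbabilityMeasure μ]
    {H : Type*} [NormedAddCommGroup H] [InnerProductSpace ℂ H] [FiniteDimensional ℂ H]
    {H' : Type*} [NormedAddCommGroup H'] [InnerProductSpace ℂ H'] [FiniteDimensional ℂ H']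
    (π : G →* (H →L[ℂ] H)) (π' : G →* (H' →L[ℂ] H'))
    (hπu : ∀ (g : G) (x y : H), (inner ℂ (π g x) (π g y) : ℂ) = inner ℂ x y)
    (hπ'u : ∀ (g : G) (x y : H'), (inner ℂ (π' g x) (π' g y) : ℂ) = inner ℂ x y)
    (hπc : ∀ x : H, Continuous fun g => π g x)
    (hπ'c : ∀ x : H', Continuous fun g => π' g x)
    (hirr : ∀ V : Submodule ℂ H, IsClosed (V : Set H) →
      (∀ g : G, ∀ v ∈ V, π g v ∈ V) → V = ⊥ ∨ V = ⊤)
    (hirr' : ∀ V : Submodule ℂ H', IsClosed (V : Set H') →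
      (∀ g : G, ∀ v ∈ V, π' g v ∈ V) → V = ⊥ ∨ V = ⊤)
    (hneq : ¬ ∃ U : H ≃ₗᵢ[ℂ] H', ∀ (g : G) (x : H), U (π g x) = π' g (U x))
    (α β : H) (γ δ : H') :
    ∫ g, (inner ℂ (π g α) β : ℂ) * (starRingEnd ℂ) (inner ℂ (π' g γ) δ) ∂μ = 0 := by
  classical
  -- right invariance of the Haar measure on a compact group
  have hrinv : μ.IsMulRightInvariant := by
    constructor
    intro g
    have : IsProbabilityMeasure (μ.map (· * g)) :=
      Measure.isProbabilityMeasure_map (measurable_mul_const g).aemeasurable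
    exact Measure.isHaarMeasure_eq_of_isProbabilityMeasure _ μ
  -- π g is invertible with inverse π g⁻¹
  have hπinv : ∀ (g : G) (v : H), π g (π g⁻¹ v) = v := by
    intro g v
    have : π g * π g⁻¹ = 1 := by rw [← map_mul, mul_inv_cancel, map_one]
    calc π g (π g⁻¹ v) = (π g * π g⁻¹) v := rfl
      _ = v := by rw [this]; rfl
  have hπ'inv : ∀ (g : G) (v : H'), π' g (π' g⁻¹ v) = v := by
    intro g v
    have : π' g * π' g⁻¹ = 1 := by rw [← map_mul, mul_inv_cancel, map_one]
    calc π' g (π' g⁻¹ v) = (π' g * π' g⁻¹) v := rfl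
      _ = v := by rw [this]; rfl
  -- the averaged operator
  set T : H' → H := fun x => ∫ g, (inner ℂ δ (π' g x) : ℂ) • (π g⁻¹ β) ∂μ with hT
  have hint : ∀ x : H', Integrable (fun g => (inner ℂ δ (π' g x) : ℂ) • (π g⁻¹ β)) μ := by
    intro x
    have hc : Continuous fun g : G => (inner ℂ δ (π' g x) : ℂ) • (π g⁻¹ β) :=
      (Continuous.inner continuous_const (hπ'c x)).smul ((hπc β).comp continuous_inv)
    exact hc.integrable_of_hasCompactSupport ((isClosed_tsupport _).isCompact)
  -- T intertwines π' and π
  have hcomm : ∀ (h : G) (x : H'), T (π' h x) = π h (T x) := by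
    intro h x
    have e1 : T (π' h x)
        = ∫ g, ((inner ℂ δ (π' (g * h) x) : ℂ) • (π (h * (g * h)⁻¹) β)) ∂μ := by
      rw [hT]
      refine integral_congr_ae (Filter.Eventually.of_forall fun g => ?_)
      simp only [map_mul, ContinuousLinearMap.mul_apply, mul_inv_rev,
        mul_inv_cancel_left, inv_inv]
    have e2 : (∫ g, ((inner ℂ δ (π' (g * h) x) : ℂ) • (π (h * (g * h)⁻¹) β)) ∂μ)
        = ∫ g, ((inner ℂ δ (π' g x) : ℂ) • (π (h * g⁻¹) β)) ∂μ :=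
      integral_mul_right_eq_self (fun k => (inner ℂ δ (π' k x) : ℂ) • (π (h * k⁻¹) β)) h
    have e3 : (∫ g, ((inner ℂ δ (π' g x) : ℂ) • (π (h * g⁻¹) β)) ∂μ)
        = ∫ g, (π h) ((inner ℂ δ (π' g x) : ℂ) • (π g⁻¹ β)) ∂μ := by
      refine integral_congr_ae (Filter.Eventually.of_forall fun g => ?_)
      show (inner ℂ δ (π' g x) : ℂ) • (π (h * g⁻¹) β)
          = (π h) ((inner ℂ δ (π' g x) : ℂ) • (π g⁻¹ β))
      rw [map_mul, ContinuousLinearMap.mul_apply, ContinuousLinearMap.map_smul]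
    rw [e1, e2, e3, ContinuousLinearMap.integral_comp_comm _ (hint x)]
  -- the integral equals ⟪α, T γ⟫
  have hIeq : (∫ g, (inner ℂ (π g α) β : ℂ) * (starRingEnd ℂ) (inner ℂ (π' g γ) δ) ∂μ)
      = (inner ℂ α (T γ) : ℂ) := by
    rw [hT, ← integral_inner (hint γ) α]
    refine integral_congr_ae (Filter.Eventually.of_forall fun g => ?_)
    show (inner ℂ (π g α) β : ℂ) * (starRingEnd ℂ) (inner ℂ (π' g γ) δ)
        = inner ℂ α ((inner ℂ δ (π' g γ) : ℂ) • (π g⁻¹ β))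
    rw [inner_smul_right]
    have h1 : (starRingEnd ℂ) (inner ℂ (π' g γ) δ : ℂ) = inner ℂ δ (π' g γ) :=
      inner_conj_symm δ (π' g γ)
    have h2 : (inner ℂ α (π g⁻¹ β) : ℂ) = inner ℂ (π g α) β := by
      rw [← hπu g α (π g⁻¹ β), hπinv]
    rw [h1, h2, mul_comm]
  rw [hIeq]
  -- Schur's lemma: T = 0, otherwise the representations would be equivalent
  by_contra hI
  have hTγ : T γ ≠ 0 := fun h => hI (by rw [h, inner_zero_right])
  -- bundle T as a (continuous) linear map
  have hadd : ∀ x y : H', T (x + y) = T x + T y := by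
    intro x y
    rw [hT]
    simp only [map_add, inner_add_right, add_smul]
    exact integral_add (hint x) (hint y)
  have hsmul : ∀ (c : ℂ) (x : H'), T (c • x) = c • T x := by
    intro c x
    rw [hT]
    simp only [ContinuousLinearMap.map_smul, inner_smul_right, mul_smul]
    exact integral_smul c _
  let Tl : H' →ₗ[ℂ] H :=
    { toFun := T, map_add' := hadd, map_smul' := hsmul }
  let Tc : H' →L[ℂ] H := LinearMap.toContinuousLinearMap Tl
  have hTc : ∀ x, Tc x = T x := fun _ => rfl
  have hγ : γ ≠ 0 := by
    rintro rfl
    exact hTγ (by simpa using hsmul 0 0)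
  have : Nontrivial H' := nontrivial_of_ne γ 0 hγ
  have : Nontrivial H := nontrivial_of_ne (T γ) 0 hTγ
  -- T is injective
  have hker : LinearMap.ker Tl = ⊥ := by
    rcases hirr' (LinearMap.ker Tl) (Submodule.closed_of_finiteDimensional _)
        (fun g v hv => by
          have hv' : T v = 0 := LinearMap.mem_ker.mp hv
          have : T (π' g v) = 0 := by rw [hcomm g v, hv', map_zero]
          exact LinearMap.mem_ker.mpr this) with h | h
    · exact h
    · exfalso
      have hmem : γ ∈ LinearMap.ker Tl := by rw [h]; trivial
      exact hTγ (LinearMap.mem_ker.mp hmem)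
  have hinj : Function.Injective T := LinearMap.ker_eq_bot.mp hker
  -- T is surjective
  have hrange : LinearMap.range Tl = ⊤ := by
    rcases hirr (LinearMap.range Tl) (Submodule.closed_of_finiteDimensional _)
        (fun g v hv => by
          obtain ⟨w, rfl⟩ := hv
          exact ⟨π' g w, show T (π' g w) = π g (T w) from hcomm g w⟩) with h | h
    · exfalso
      have hmem : Tl γ ∈ LinearMap.range Tl := LinearMap.mem_range_self Tl γ
      rw [h] at hmem
      exact hTγ ((Submodule.mem_bot ℂ).mp hmem)
    · exact h
  have hsurj : Function.Surjective T := LinearMap.range_eq_top.mp hrange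
  -- the adjoint intertwines in the other direction
  let A : H →L[ℂ] H' := ContinuousLinearMap.adjoint Tc
  have hA : ∀ (g : G) (x : H), A (π g x) = π' g (A x) := by
    intro g x
    refine ext_inner_left ℂ fun v => ?_
    calc (inner ℂ v (A (π g x)) : ℂ)
        = inner ℂ (Tc v) (π g x) := ContinuousLinearMap.adjoint_inner_right Tc _ _
      _ = inner ℂ (π g (π g⁻¹ (Tc v))) (π g x) := by rw [hπinv]
      _ = inner ℂ (π g⁻¹ (Tc v)) x := hπu g _ x
      _ = inner ℂ (Tc (π' g⁻¹ v)) x := by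
          rw [show (Tc (π' g⁻¹ v) : H) = T (π' g⁻¹ v) from rfl, hcomm,
            show (Tc v : H) = T v from rfl]
      _ = inner ℂ (π' g⁻¹ v) (A x) := (ContinuousLinearMap.adjoint_inner_right Tc _ _).symm
      _ = inner ℂ (π' g (π' g⁻¹ v)) (π' g (A x)) := (hπ'u g _ _).symm
      _ = inner ℂ v (π' g (A x)) := by rw [hπ'inv]
  -- S = A ∘ T commutes with π'
  let S : H' →L[ℂ] H' := A.comp Tc
  have hS : ∀ (g : G) (x : H'), S (π' g x) = π' g (S x) := by
    intro g x
    show A (Tc (π' g x)) = π' g (A (Tc x))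
    rw [hTc, hTc, hcomm, ← hA]
  -- S is a scalar
  obtain ⟨c, hc⟩ := Module.End.exists_eigenvalue (S : H' →ₗ[ℂ] H')
  have hES : Module.End.eigenspace (S : H' →ₗ[ℂ] H') c = ⊤ := by
    rcases hirr' (Module.End.eigenspace (S : H' →ₗ[ℂ] H') c)
        (Submodule.closed_of_finiteDimensional _)
        (fun g v hv => by
          rw [Module.End.mem_eigenspace_iff] at hv ⊢
          show S (π' g v) = c • π' g v
          have hv' : S v = c • v := hv
          rw [hS g v, hv', ContinuousLinearMap.map_smul]) with h | h
    · exact absurd h hc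
    · exact h
  have hSc : ∀ x : H', S x = c • x := fun x => by
    have hx : x ∈ Module.End.eigenspace (S : H' →ₗ[ℂ] H') c := by rw [hES]; trivial
    exact Module.End.mem_eigenspace_iff.mp hx
  -- consequently ‖T x‖² = c ‖x‖²
  have hnorm : ∀ x : H', ((‖T x‖ : ℂ)) ^ 2 = c * (‖x‖ : ℂ) ^ 2 := by
    intro x
    have h1 : (inner ℂ x (S x) : ℂ) = inner ℂ (Tc x) (Tc x) :=
      ContinuousLinearMap.adjoint_inner_right Tc _ _
    rw [hSc, inner_smul_right, inner_self_eq_norm_sq_to_K, inner_self_eq_norm_sq_to_K] at h1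
    rw [show (‖T x‖ : ℝ) = ‖Tc x‖ from rfl]
    exact h1.symm
  set t : ℝ := ‖T γ‖ / ‖γ‖ with ht
  have hγn : ‖γ‖ ≠ 0 := norm_ne_zero_iff.mpr hγ
  have htpos : 0 < t := div_pos (norm_pos_iff.mpr hTγ) (norm_pos_iff.mpr hγ)
  have hcval : c = (t : ℂ) ^ 2 := by
    have h := hnorm γ
    have hγc : ((‖γ‖ : ℂ)) ≠ 0 := by exact_mod_cast hγn
    have ht' : (t : ℂ) = (‖T γ‖ : ℂ) / (‖γ‖ : ℂ) := by rw [ht]; push_cast; ring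
    rw [ht', div_pow, h, mul_div_assoc, div_self (pow_ne_zero 2 hγc), mul_one]
  have hTnorm : ∀ x : H', ‖T x‖ = t * ‖x‖ := by
    intro x
    have h := hnorm x
    rw [hcval] at h
    have h' : ((‖T x‖ : ℂ)) ^ 2 = (((t * ‖x‖ : ℝ) : ℂ)) ^ 2 := by
      rw [h]; push_cast; ring
    have h2 : ‖T x‖ ^ 2 = (t * ‖x‖) ^ 2 := by
      exact_mod_cast h'
    have := congrArg Real.sqrt h2
    rwa [Real.sqrt_sq (norm_nonneg _),
      Real.sqrt_sq (mul_nonneg htpos.le (norm_nonneg _))] at this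
  -- build the unitary equivalence
  let Tl' : H' →ₗ[ℂ] H := ((t⁻¹ : ℂ) • Tl)
  have hTl' : ∀ x, Tl' x = (t⁻¹ : ℂ) • T x := fun _ => rfl
  have hbij : Function.Bijective Tl' := by
    constructor
    · intro x y hxy
      apply hinj
      have : (t⁻¹ : ℂ) • T x = (t⁻¹ : ℂ) • T y := hxy
      have htne : (t⁻¹ : ℂ) ≠ 0 := by
        simp [Complex.ofReal_ne_zero, htpos.ne']
      exact smul_right_injective H htne this
    · intro y
      obtain ⟨x, hx⟩ := hsurj y
      exact ⟨(t : ℂ) • x, by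
        rw [hTl', hsmul, smul_smul]
        have htne : (t : ℂ) ≠ 0 := by simp [htpos.ne']
        rw [inv_mul_cancel₀ htne, one_smul, hx]⟩
  let e : H' ≃ₗ[ℂ] H := LinearEquiv.ofBijective Tl' hbij
  have henorm : ∀ x : H', ‖e x‖ = ‖x‖ := by
    intro x
    show ‖Tl' x‖ = ‖x‖
    rw [hTl', norm_smul, hTnorm]
    simp only [norm_inv, Complex.norm_real, Real.norm_eq_abs, abs_of_pos htpos]
    field_simp
  let V : H' ≃ₗᵢ[ℂ] H := ⟨e, henorm⟩
  have hV : ∀ (g : G) (x : H'), V (π' g x) = π g (V x) := by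
    intro g x
    show Tl' (π' g x) = π g (Tl' x)
    rw [hTl', hTl', hcomm, ContinuousLinearMap.map_smul]
  refine hneq ⟨V.symm, fun g x => ?_⟩
  apply V.injective
  rw [V.apply_symm_apply, hV, V.apply_symm_apply]
end

section
/- Let G be a locally compact group with left Haar measure, π : G → U(H) a strongly continuous unitary representation, and ξ ∈ H a vector such that for every β ∈ H the coefficient function g ↦ ⟨π(g)ξ, β⟩ lies in L²(G). Then the linear map ⟨ξ| : H → L²(G), β ↦ (g ↦ ⟨π(g)ξ, β⟩), is bounded. -/
open MeasureTheory Filter Topology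

/-- If `π` is a strongly continuous unitary representation of a locally compact group `G` on a
Hilbert space `H` and `ξ ∈ H` is such that all coefficient functions `g ↦ ⟪π g ξ, β⟫` lie in
`L²(G)` (left Haar measure), then the map `β ↦ (g ↦ ⟪π g ξ, β⟫)` is bounded into `L²(G)`. -/
theorem stmt7 {G : Type*} [Group G] [TopologicalSpace G] [IsTopologicalGroup G]
    [LocallyCompactSpace G] [MeasurableSpace G] [BorelSpace G]
    (μ : Measure G) [μ.IsHaarMeasure]
    {H : Type*} [NormedAddCommGroup H] [InnerProductSpace ℂ H] [CompleteSpace H]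
    (π : G →* (H →L[ℂ] H))
    (hπu : ∀ (g : G) (x y : H), (inner ℂ (π g x) (π g y) : ℂ) = inner ℂ x y)
    (hπc : ∀ x : H, Continuous fun g => π g x)
    (ξ : H) (hξ : ∀ β : H, MemLp (fun g => (inner ℂ (π g ξ) β : ℂ)) 2 μ) :
    ∃ C : ℝ, 0 ≤ C ∧ ∀ β : H,
      eLpNorm (fun g => (inner ℂ (π g ξ) β : ℂ)) 2 μ ≤ ENNReal.ofReal (C * ‖β‖) := by
  haveI : Fact ((1 : ENNReal) ≤ 2) := ⟨one_le_two⟩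
  -- the linear map β ↦ coefficient function, into L²
  set T : H →ₗ[ℂ] Lp ℂ 2 μ :=
    { toFun := fun β => (hξ β).toLp _
      map_add' := by
        intro a b
        rw [← MemLp.toLp_add (hξ a) (hξ b)]
        exact MemLp.toLp_congr _ _ (Eventually.of_forall fun g => by
          simp [inner_add_right])
      map_smul' := by
        intro c a
        rw [RingHom.id_apply]
        show (hξ (c • a)).toLp _ = c • (hξ a).toLp _
        rw [← MemLp.toLp_const_smul c (hξ a)]
        exact MemLp.toLp_congr (hξ (c • a)) ((hξ a).const_smul c)
          (Filter.Eventually.of_forall fun g => by simp [inner_smul_right]) } with hTdef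
  -- closed graph theorem
  have hcont : Continuous T := by
    refine T.continuous_of_seq_closed_graph fun u x y hu hTu => ?_
    -- L² convergence gives a subsequence converging a.e. to y
    have hmeas : TendstoInMeasure μ (fun n => ((T (u n) : Lp ℂ 2 μ) : G → ℂ)) atTop y :=
      tendstoInMeasure_of_tendsto_Lp hTu
    obtain ⟨ns, hns, hae⟩ := hmeas.exists_seq_tendsto_ae
    -- pointwise convergence of the coefficient functions
    have hpt : ∀ g : G, Tendsto (fun n => (inner ℂ (π g ξ) (u n) : ℂ)) atTop
        (𝓝 (inner ℂ (π g ξ) x)) := fun g =>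
      ((innerSL ℂ (π g ξ)).continuous.tendsto x).comp hu
    have hcoe : ∀ᵐ g ∂μ, ∀ n, ((T (u n) : Lp ℂ 2 μ) : G → ℂ) g = inner ℂ (π g ξ) (u n) := by
      rw [ae_all_iff]
      exact fun n => (hξ (u n)).coeFn_toLp
    refine Lp.ext ?_
    filter_upwards [hae, hcoe, (hξ x).coeFn_toLp] with g h1 h2 h3
    have h4 : Tendsto (fun i => (inner ℂ (π g ξ) (u (ns i)) : ℂ)) atTop
        (𝓝 (inner ℂ (π g ξ) x)) := (hpt g).comp hns.tendsto_atTop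
    have h5 : Tendsto (fun i => (inner ℂ (π g ξ) (u (ns i)) : ℂ)) atTop (𝓝 (y g)) := by
      simpa [h2] using h1
    have h3' : ((T x : Lp ℂ 2 μ) : G → ℂ) g = inner ℂ (π g ξ) x := h3
    rw [h3', tendsto_nhds_unique h5 h4]
  -- extract the operator norm bound
  let T' : H →L[ℂ] Lp ℂ 2 μ := ⟨T, hcont⟩
  refine ⟨‖T'‖, norm_nonneg _, fun β => ?_⟩
  have hb : ‖(hξ β).toLp _‖ ≤ ‖T'‖ * ‖β‖ := T'.le_opNorm β
  rw [Lp.norm_toLp] at hb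
  rw [← ENNReal.ofReal_toReal (hξ β).2.ne]
  exact ENNReal.ofReal_le_ofReal hb
end

section
/- Let B be a C*-algebra, H a Hilbert B-module, and (x_i)_{i∈I} an increasing net of positive elements of the multiplier algebra M(B) (equivalently, of adjointable operators B(B) on B viewed as a Hilbert module over itself), bounded above in norm. Then (x_i) converges in the strict topology of M(B) to some y ∈ M(B) if and only if for every b ∈ B the net (b* x_i b) converges in norm in B, and in that case b* y b = lim b* x_i b. -/
open MultiplierAlgebra Filter Topology

set_option linter.unusedSectionVars false

section Aux

variable {B : Type*} [NonUnitalNormedRing B] [StarRing B] [CStarRing B]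
    [NormedSpace ℂ B] [SMulCommClass ℂ B B] [IsScalarTower ℂ B B]
    [StarModule ℂ B] [NormedStarGroup B] [CompleteSpace B]

/-- Key estimate: if `d = star c * c` in the multiplier algebra, then
`‖d.fst b‖ ^ 2 ≤ ‖d‖ * ‖star b * d.fst b‖`. -/
lemma aux_key_estimate (d c : 𝓜(ℂ, B)) (hd : d = star c * c) (b : B) :
    ‖d.fst b‖ ^ 2 ≤ ‖d‖ * ‖star b * d.fst b‖ := by
  have hfst : d.fst b = (star c).fst (c.fst b) := by
    rw [hd, DoubleCentralizer.mul_fst]; rfl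
  have hid : star b * d.fst b = star (c.fst b) * c.fst b := by
    rw [hfst, DoubleCentralizer.star_fst]
    rw [← star_mul]
    rw [c.central (star (c.fst b)) b]
    rw [star_mul, star_star]
  have h1 : ‖d.fst b‖ ≤ ‖c‖ * ‖c.fst b‖ := by
    rw [hfst]
    calc ‖(star c).fst (c.fst b)‖ ≤ ‖(star c).fst‖ * ‖c.fst b‖ :=
          (star c).fst.le_opNorm _
      _ = ‖c‖ * ‖c.fst b‖ := by rw [DoubleCentralizer.norm_fst, norm_star]
  have h2 : ‖star b * d.fst b‖ = ‖c.fst b‖ * ‖c.fst b‖ := by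
    rw [hid, CStarRing.norm_star_mul_self]
  have h3 : ‖d‖ = ‖c‖ * ‖c‖ := by rw [hd, CStarRing.norm_star_mul_self]
  have hn1 : (0 : ℝ) ≤ ‖d.fst b‖ := norm_nonneg _
  have hn2 : (0 : ℝ) ≤ ‖c‖ := norm_nonneg _
  have hn3 : (0 : ℝ) ≤ ‖c.fst b‖ := norm_nonneg _
  nlinarith [mul_le_mul h1 h1 hn1 (by positivity)]

end Aux

/-- (Kustermans–Vaes, Result 3.4.)  An increasing, norm-bounded net `(x_i)` of positive
elements of the multiplier algebra `M(B)` of a C*-algebra `B` converges strictly to some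
`y ∈ M(B)` if and only if for every `b ∈ B` the net `(b* x_i b)` converges in norm in `B`;
and in that case `b* y b = lim b* x_i b`. -/
theorem stmt15 {B : Type*} [NonUnitalNormedRing B] [StarRing B] [CStarRing B]
    [NormedSpace ℂ B] [SMulCommClass ℂ B B] [IsScalarTower ℂ B B]
    [StarModule ℂ B] [NormedStarGroup B] [CompleteSpace B]
    {I : Type*} [Nonempty I] [SemilatticeSup I]
    (x : I → 𝓜(ℂ, B))
    (hpos : ∀ i, ∃ c : 𝓜(ℂ, B), x i = star c * c)
    (hmono : ∀ i j, i ≤ j → ∃ c : 𝓜(ℂ, B), x j - x i = star c * c)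
    (hbdd : ∃ M : ℝ, ∀ i, ‖x i‖ ≤ M) :
    ((∃ y : 𝓜(ℂ, B), ∀ b : B,
        Tendsto (fun i => (x i).fst b) atTop (𝓝 (y.fst b)) ∧
        Tendsto (fun i => (x i).snd b) atTop (𝓝 (y.snd b))) ↔
      (∀ b : B, ∃ l : B, Tendsto (fun i => star b * (x i).fst b) atTop (𝓝 l))) ∧
    (∀ y : 𝓜(ℂ, B), (∀ b : B,
        Tendsto (fun i => (x i).fst b) atTop (𝓝 (y.fst b)) ∧
        Tendsto (fun i => (x i).snd b) atTop (𝓝 (y.snd b))) →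
      ∀ b : B, Tendsto (fun i => star b * (x i).fst b) atTop (𝓝 (star b * y.fst b))) := by
  obtain ⟨M, hM⟩ := hbdd
  have hM0 : 0 ≤ M := le_trans (norm_nonneg _) (hM (Classical.arbitrary I))
  -- the easy direction, stated once
  have easy : ∀ y : 𝓜(ℂ, B), (∀ b : B,
      Tendsto (fun i => (x i).fst b) atTop (𝓝 (y.fst b)) ∧
      Tendsto (fun i => (x i).snd b) atTop (𝓝 (y.snd b))) →
      ∀ b : B, Tendsto (fun i => star b * (x i).fst b) atTop (𝓝 (star b * y.fst b)) := by
    intro y hy b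
    exact ((hy b).1).const_mul (star b)
  refine ⟨⟨fun ⟨y, hy⟩ b => ⟨star b * y.fst b, easy y hy b⟩, ?_⟩, easy⟩
  -- the hard direction
  intro h
  -- each `x i` is selfadjoint
  have hsa : ∀ i, star (x i) = x i := by
    intro i
    obtain ⟨c, hc⟩ := hpos i
    rw [hc, star_mul, star_star]
  have hsnd : ∀ i (b : B), (x i).snd b = star ((x i).fst (star b)) := by
    intro i b
    conv_lhs => rw [← hsa i]
    rw [DoubleCentralizer.star_snd]
  -- Cauchy estimate for the net `i ↦ (x i).fst b`
  have key : ∀ (b : B) (i j : I), i ≤ j →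
      ‖(x j).fst b - (x i).fst b‖ ^ 2 ≤
        (2 * M) * ‖star b * (x j).fst b - star b * (x i).fst b‖ := by
    intro b i j hij
    obtain ⟨c, hc⟩ := hmono i j hij
    have hfb : (x j).fst b - (x i).fst b = (x j - x i).fst b := by
      rw [DoubleCentralizer.sub_fst]; rfl
    have hsb : star b * (x j).fst b - star b * (x i).fst b
        = star b * ((x j - x i).fst b) := by rw [← hfb, mul_sub]
    rw [hfb, hsb]
    calc ‖(x j - x i).fst b‖ ^ 2 ≤ ‖x j - x i‖ * ‖star b * ((x j - x i).fst b)‖ :=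
          aux_key_estimate _ c hc b
      _ ≤ (2 * M) * ‖star b * ((x j - x i).fst b)‖ := by
          apply mul_le_mul_of_nonneg_right _ (norm_nonneg _)
          calc ‖x j - x i‖ ≤ ‖x j‖ + ‖x i‖ := norm_sub_le _ _
            _ ≤ 2 * M := by linarith [hM i, hM j]
  -- the net `i ↦ (x i).fst b` converges for every `b`
  have hconv : ∀ b : B, ∃ l : B, Tendsto (fun i => (x i).fst b) atTop (𝓝 l) := by
    intro b
    apply cauchySeq_tendsto_of_complete
    rw [Metric.cauchySeq_iff']
    intro ε hε
    obtain ⟨l, hl⟩ := h b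
    have hC : CauchySeq (fun i => star b * (x i).fst b) := hl.cauchySeq
    rw [Metric.cauchySeq_iff'] at hC
    obtain ⟨N, hN⟩ := hC (ε ^ 2 / (2 * M + 1)) (by positivity)
    refine ⟨N, fun n hn => ?_⟩
    have h1 := key b N n hn
    have h2 := hN n hn
    rw [dist_eq_norm] at h2 ⊢
    have h4 : (2 * M) * (ε ^ 2 / (2 * M + 1)) < ε ^ 2 := by
      rw [mul_div_assoc', div_lt_iff₀ (by linarith)]
      nlinarith [sq_nonneg ε]
    have h5 : ‖(x n).fst b - (x N).fst b‖ ^ 2 < ε ^ 2 := by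
      nlinarith [norm_nonneg (star b * (x n).fst b - star b * (x N).fst b)]
    exact lt_of_pow_lt_pow_left₀ 2 hε.le h5
  -- construct the limit as a function
  choose F hF using hconv
  have hG : ∀ b : B, Tendsto (fun i => (x i).snd b) atTop (𝓝 (star (F (star b)))) := by
    intro b
    have : Tendsto (fun i => star ((x i).fst (star b))) atTop (𝓝 (star (F (star b)))) :=
      (continuous_star.tendsto _).comp (hF (star b))
    simpa only [hsnd] using this
  -- basic properties of F
  have hFadd : ∀ a b : B, F (a + b) = F a + F b := by
    intro a b
    refine tendsto_nhds_unique ?_ ((hF a).add (hF b))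
    simpa only [map_add] using hF (a + b)
  have hFsmul : ∀ (k : ℂ) (b : B), F (k • b) = k • F b := by
    intro k b
    refine tendsto_nhds_unique ?_ ((hF b).const_smul k)
    simpa only [map_smul] using hF (k • b)
  have hFbound : ∀ b : B, ‖F b‖ ≤ M * ‖b‖ := by
    intro b
    refine le_of_tendsto ((continuous_norm.tendsto _).comp (hF b)) ?_
    filter_upwards with i
    calc ‖(x i).fst b‖ ≤ ‖(x i).fst‖ * ‖b‖ := (x i).fst.le_opNorm b
      _ ≤ M * ‖b‖ := by
        apply mul_le_mul_of_nonneg_right _ (norm_nonneg b)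
        rw [DoubleCentralizer.norm_fst]; exact hM i
  -- package F and its "star conjugate" into continuous linear maps
  let Flm : B →ₗ[ℂ] B := { toFun := F, map_add' := hFadd, map_smul' := hFsmul }
  let Fclm : B →L[ℂ] B := Flm.mkContinuous M hFbound
  let G : B → B := fun b => star (F (star b))
  have hGadd : ∀ a b : B, G (a + b) = G a + G b := by
    intro a b
    simp only [G, star_add, hFadd]
  have hGsmul : ∀ (k : ℂ) (b : B), G (k • b) = k • G b := by
    intro k b
    simp only [G, star_smul, hFsmul, starRingEnd_apply, star_star]
  have hGbound : ∀ b : B, ‖G b‖ ≤ M * ‖b‖ := by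
    intro b
    simpa only [G, norm_star] using hFbound (star b)
  let Glm : B →ₗ[ℂ] B := { toFun := G, map_add' := hGadd, map_smul' := hGsmul }
  let Gclm : B →L[ℂ] B := Glm.mkContinuous M hGbound
  have hcentral : ∀ a b : B, Gclm a * b = a * Fclm b := by
    intro a b
    have h1 : Tendsto (fun i => (x i).snd a * b) atTop (𝓝 (G a * b)) :=
      (hG a).mul tendsto_const_nhds
    have h2 : Tendsto (fun i => a * (x i).fst b) atTop (𝓝 (a * F b)) :=
      tendsto_const_nhds.mul (hF b)
    have heq : (fun i => (x i).snd a * b) = fun i => a * (x i).fst b := by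
      funext i; exact (x i).central a b
    rw [heq] at h1
    exact tendsto_nhds_unique h1 h2
  refine ⟨⟨⟨Fclm, Gclm⟩, hcentral⟩, fun b => ⟨?_, ?_⟩⟩
  · exact hF b
  · exact hG b
end

section
/- Let G be a locally compact group with left Haar measure, π an irreducible strongly continuous unitary representation of G on a Hilbert space H, and ξ ∈ H a nonzero square-integrable vector. Then there exists an isometry V : H → L²(G) intertwining π with the left regular representation; in particular every irreducible square-integrable representation is unitarily equivalent to a subrepresentation of the left regular representation. -/
open MeasureTheory

private lemma schur_aux {ι : Type*} {H : Type*} [NormedAddCommGroup H]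
    [InnerProductSpace ℂ H] [CompleteSpace H] [Nontrivial H]
    (u v : ι → H →L[ℂ] H)
    (huv : ∀ i, u i * v i = 1) (hvu : ∀ i, v i * u i = 1)
    (hstar : ∀ i, star (u i) = v i)
    (hirr : ∀ W : Submodule ℂ H, IsClosed (W : Set H) →
      (∀ i, ∀ x ∈ W, u i x ∈ W) → W = ⊥ ∨ W = ⊤)
    (S : H →L[ℂ] H) (hS : IsSelfAdjoint S) (hcomm : ∀ i, u i * S = S * u i) :
    ∃ c : ℝ, S = algebraMap ℝ (H →L[ℂ] H) c := by
  -- conjugation commutes with cfc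
  have key : ∀ i (f : ℝ → ℝ), ContinuousOn f (spectrum ℝ S) →
      u i * cfc f S = cfc f S * u i := by
    intro i f hf
    have hstarv : star (v i) = u i := by rw [← hstar i, star_star]
    let ψ : (H →L[ℂ] H) →⋆ₐ[ℂ] (H →L[ℂ] H) :=
    { toFun := fun x => u i * x * v i
      map_one' := by show u i * 1 * v i = 1; rw [mul_one, huv]
      map_mul' := fun x y => by
        have : v i * (u i * y * v i) = y * v i := by
          rw [← mul_assoc, ← mul_assoc, hvu, one_mul]
        calc u i * (x * y) * v i = u i * x * (v i * (u i * y * v i)) := by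
              rw [this]; noncomm_ring
          _ = (u i * x * v i) * (u i * y * v i) := by noncomm_ring
      map_zero' := by simp
      map_add' := fun x y => by noncomm_ring
      commutes' := fun c => by
        simp only [Algebra.algebraMap_eq_smul_one]
        rw [mul_smul_comm, mul_one, smul_mul_assoc, huv]
      map_star' := fun x => by
        simp only [star_mul, hstar i, hstarv, mul_assoc] }
    have hψc : Continuous ψ := by
      show Continuous fun x => u i * x * v i
      exact (continuous_const.mul continuous_id).mul continuous_const
    have hψS : ψ S = S := by
      show u i * S * v i = S
      rw [hcomm i, mul_assoc, huv, mul_one]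
    have h2 : u i * cfc f S * v i = cfc f S := by
      have := StarAlgHom.map_cfc ψ f S hf hψc hS (by rw [show ψ S = S from hψS]; exact hS)
      rw [hψS] at this
      exact this
    calc u i * cfc f S = u i * cfc f S * (v i * u i) := by rw [hvu, mul_one]
      _ = (u i * cfc f S * v i) * u i := by noncomm_ring
      _ = cfc f S * u i := by rw [h2]
  -- the spectrum is a subsingleton
  have hsub : (spectrum ℝ S).Subsingleton := by
    by_contra hns
    rw [Set.not_subsingleton_iff] at hns
    obtain ⟨a, ha, b, hb, hab⟩ := hns
    set d : ℝ := |a - b| with hd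
    have hd0 : 0 < d := abs_pos.mpr (sub_ne_zero.mpr hab)
    set f : ℝ → ℝ := fun t => max 0 (1 - (2/d) * |t - a|) with hfdef
    set g : ℝ → ℝ := fun t => max 0 (1 - (2/d) * |t - b|) with hgdef
    have hfc : Continuous f := by fun_prop
    have hgc : Continuous g := by fun_prop
    have hfa : f a = 1 := by simp [hfdef]
    have hgb : g b = 1 := by simp [hgdef]
    have hvanish : ∀ t : ℝ, |t - a| ≥ d/2 → f t = 0 := by
      intro t ht
      have : 1 - (2/d) * |t - a| ≤ 0 := by
        have h2 : (2/d) * (d/2) ≤ (2/d) * |t - a| :=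
          mul_le_mul_of_nonneg_left ht (by positivity)
        have : (2/d) * (d/2) = 1 := by field_simp
        linarith
      simp only [hfdef]
      exact max_eq_left this
    have hvanish' : ∀ t : ℝ, |t - b| ≥ d/2 → g t = 0 := by
      intro t ht
      have : 1 - (2/d) * |t - b| ≤ 0 := by
        have h2 : (2/d) * (d/2) ≤ (2/d) * |t - b| :=
          mul_le_mul_of_nonneg_left ht (by positivity)
        have : (2/d) * (d/2) = 1 := by field_simp
        linarith
      simp only [hgdef]
      exact max_eq_left this
    have hfg : ∀ t : ℝ, g t * f t = 0 := by
      intro t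
      rcases le_or_gt (d/2) (|t - a|) with h | h
      · rw [hvanish t h, mul_zero]
      · have : d/2 ≤ |t - b| := by
          have := abs_sub_abs_le_abs_sub (a - b) (t - b)
          have h3 : |(a - b) - (t - b)| = |t - a| := by
            rw [show (a - b) - (t - b) = -(t - a) by ring, abs_neg]
          rw [h3] at this
          linarith [le_abs_self (a-b), abs_nonneg (a-b)]
        rw [hvanish' t this, zero_mul]
    set P : H →L[ℂ] H := cfc f S with hPdef
    set Q : H →L[ℂ] H := cfc g S with hQdef
    have hP0 : P ≠ 0 := by
      intro h0
      have h1 : (1:ℝ) ∈ spectrum ℝ P := by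
        rw [hPdef, cfc_map_spectrum f S hS hfc.continuousOn]
        exact ⟨a, ha, hfa⟩
      rw [h0, spectrum.zero_eq] at h1
      exact one_ne_zero (Set.mem_singleton_iff.mp h1)
    have hQ0 : Q ≠ 0 := by
      intro h0
      have h1 : (1:ℝ) ∈ spectrum ℝ Q := by
        rw [hQdef, cfc_map_spectrum g S hS hgc.continuousOn]
        exact ⟨b, hb, hgb⟩
      rw [h0, spectrum.zero_eq] at h1
      exact one_ne_zero (Set.mem_singleton_iff.mp h1)
    have hQP : Q * P = 0 := by
      rw [hQdef, hPdef, ← cfc_mul g f S hgc.continuousOn hfc.continuousOn]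
      calc cfc (fun t => g t * f t) S = cfc (fun _ : ℝ => (0:ℝ)) S := by
            apply cfc_congr; intro t _; exact hfg t
        _ = 0 := by simp
    set W : Submodule ℂ H :=
      (LinearMap.range (P : H →ₗ[ℂ] H)).topologicalClosure with hWdef
    have hWclosed : IsClosed (W : Set H) := Submodule.isClosed_topologicalClosure _
    have hWinv : ∀ i, ∀ x ∈ W, u i x ∈ W := by
      intro i x hx
      have hcommP : ∀ z, u i (P z) = P (u i z) := by
        intro z
        have := key i f hfc.continuousOn
        calc u i (P z) = (u i * P) z := rfl
          _ = (P * u i) z := by rw [this]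
          _ = P (u i z) := rfl
      have hmaps : (u i) '' (LinearMap.range (P : H →ₗ[ℂ] H) : Set H) ⊆
          (LinearMap.range (P : H →ₗ[ℂ] H) : Set H) := by
        rintro _ ⟨_, ⟨z, rfl⟩, rfl⟩
        exact ⟨u i z, (hcommP z).symm⟩
      have hx' : x ∈ closure (LinearMap.range (P : H →ₗ[ℂ] H) : Set H) := hx
      have : u i x ∈ closure (LinearMap.range (P : H →ₗ[ℂ] H) : Set H) := by
        have h1 : u i x ∈ (u i) '' (closure (LinearMap.range (P : H →ₗ[ℂ] H) : Set H)) :=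
          ⟨x, hx', rfl⟩
        have h2 := image_closure_subset_closure_image (f := (u i : H → H))
          (s := (LinearMap.range (P : H →ₗ[ℂ] H) : Set H)) (u i).continuous
        exact closure_mono hmaps (h2 h1)
      exact this
    rcases hirr W hWclosed hWinv with hbot | htop
    · apply hP0
      ext z
      have : P z ∈ W := Submodule.le_topologicalClosure _ ⟨z, rfl⟩
      rw [hbot] at this
      simpa using this
    · apply hQ0
      ext z
      have hz : z ∈ W := by rw [htop]; trivial
      have hker : (LinearMap.range (P : H →ₗ[ℂ] H) : Set H) ⊆ {x | Q x = 0} := by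
        rintro _ ⟨w, rfl⟩
        show Q (P w) = 0
        calc Q (P w) = (Q * P) w := rfl
          _ = 0 := by rw [hQP]; rfl
      have hclosed : IsClosed {x : H | Q x = 0} :=
        isClosed_eq Q.continuous continuous_const
      have : z ∈ {x : H | Q x = 0} :=
        hclosed.closure_subset ((closure_mono hker).trans (by rw [hclosed.closure_eq]) hz)
      simpa using this
  obtain ⟨c, hc⟩ := hS.spectrum_nonempty
  have hspec : spectrum ℝ S = {c} := hsub.eq_singleton_of_mem hc
  refine ⟨c, ?_⟩
  calc S = cfc (id : ℝ → ℝ) S := (cfc_id ℝ S).symm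
    _ = cfc (fun _ => c) S := cfc_congr (by rw [hspec]; intro x hx; simpa using hx)
    _ = algebraMap ℝ (H →L[ℂ] H) c := cfc_const c S

/-- An irreducible strongly continuous unitary representation `π` of a locally compact group
`G` possessing a nonzero square-integrable vector embeds isometrically and equivariantly into
the left regular representation on `L²(G)`: there is an isometry `V : H → L²(G)` with
`V (π h x) (g) = (V x) (h⁻¹ g)` almost everywhere. -/
theorem stmt18 {G : Type*} [Group G] [TopologicalSpace G] [IsTopologicalGroup G]
    [LocallyCompactSpace G] [MeasurableSpace G] [BorelSpace G]
    (μ : Measure G) [μ.IsHaarMeasure]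
    {H : Type*} [NormedAddCommGroup H] [InnerProductSpace ℂ H] [CompleteSpace H]
    (π : G →* (H →L[ℂ] H))
    (hπu : ∀ (g : G) (x y : H), (inner ℂ (π g x) (π g y) : ℂ) = inner ℂ x y)
    (hπc : ∀ x : H, Continuous fun g => π g x)
    (hirr : ∀ V : Submodule ℂ H, IsClosed (V : Set H) →
      (∀ g : G, ∀ v ∈ V, π g v ∈ V) → V = ⊥ ∨ V = ⊤)
    (ξ : H) (hξne : ξ ≠ 0)
    (hξ : ∀ β : H, MemLp (fun g => (inner ℂ (π g ξ) β : ℂ)) 2 μ) :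
    ∃ V : H →ₗᵢ[ℂ] Lp ℂ 2 μ, ∀ (h : G) (x : H),
      ∀ᵐ g ∂μ, (V (π h x) : G → ℂ) g = (V x : G → ℂ) (h⁻¹ * g) := by
  haveI : Fact ((1:ENNReal) ≤ 2) := ⟨one_le_two⟩
  haveI hnt : Nontrivial H := ⟨ξ, 0, hξne⟩
  set φ : H → G → ℂ := fun x g => (inner ℂ (π g ξ) x : ℂ) with hφdef
  have hπone : ∀ (h : G) (x : H), π h (π h⁻¹ x) = x := by
    intro h x
    have h1 : π h * π h⁻¹ = 1 := by rw [← map_mul, mul_inv_cancel, map_one]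
    calc π h (π h⁻¹ x) = (π h * π h⁻¹) x := rfl
      _ = x := by rw [h1]; rfl
  have hφeq : ∀ (h : G) (x : H) (g : G), φ (π h x) g = φ x (h⁻¹ * g) := by
    intro h x g
    have h1 : π h (π (h⁻¹ * g) ξ) = π g ξ := by
      rw [← ContinuousLinearMap.mul_apply, ← map_mul, mul_inv_cancel_left]
    calc φ (π h x) g = (inner ℂ (π h (π (h⁻¹ * g) ξ)) (π h x) : ℂ) := by rw [h1]
      _ = inner ℂ (π (h⁻¹ * g) ξ) x := hπu h _ x
      _ = φ x (h⁻¹ * g) := rfl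
  -- the linear map T
  let T : H →ₗ[ℂ] Lp ℂ 2 μ :=
  { toFun := fun x => (hξ x).toLp _
    map_add' := fun x y => by
      refine (MemLp.toLp_congr _ ((hξ x).add (hξ y)) (Filter.EventuallyEq.of_eq
        (funext fun g => by simp [inner_add_right]))).trans (MemLp.toLp_add (hξ x) (hξ y))
    map_smul' := fun c x => by
      rw [RingHom.id_apply]
      refine (MemLp.toLp_congr (hξ (c • x)) ((hξ x).const_smul c) (Filter.EventuallyEq.of_eq
        (funext fun g => by simp [inner_smul_right]))).trans (MemLp.toLp_const_smul c (hξ x))  }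
  have hTcoe : ∀ x : H, ⇑(T x) =ᵐ[μ] φ x := fun x => (hξ x).coeFn_toLp
  -- continuity of T via the closed graph theorem
  have hTcont : Continuous T := by
    apply LinearMap.continuous_of_seq_closed_graph
    intro u x y hu hTu
    rw [show (T ∘ u) = fun n => T (u n) from rfl,
      Lp.tendsto_Lp_iff_tendsto_eLpNorm' (fun n => T (u n)) y] at hTu
    have htm : TendstoInMeasure μ (fun n => ⇑(T (u n))) Filter.atTop ⇑y :=
      tendstoInMeasure_of_tendsto_eLpNorm (by norm_num)
        (fun n => Lp.aestronglyMeasurable _) (Lp.aestronglyMeasurable _) hTu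
    obtain ⟨ns, hns, hae⟩ := htm.exists_seq_tendsto_ae
    have hpt : ∀ g : G, Filter.Tendsto (fun n => φ (u n) g) Filter.atTop (nhds (φ x g)) := by
      intro g
      have hcont : Continuous fun z : H => φ z g :=
        Continuous.inner continuous_const continuous_id
      exact (hcont.tendsto x).comp hu
    have hcoall : ∀ᵐ g ∂μ, ∀ n, (T (u n)) g = φ (u n) g := ae_all_iff.mpr fun n => hTcoe (u n)
    have hyx : ⇑y =ᵐ[μ] φ x := by
      filter_upwards [hae, hcoall] with g h1 h2
      have h3 : Filter.Tendsto (fun i => φ (u (ns i)) g) Filter.atTop (nhds (φ x g)) :=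
        (hpt g).comp hns.tendsto_atTop
      have h4 : (fun i => (T (u (ns i))) g) = fun i => φ (u (ns i)) g :=
        funext fun i => h2 _
      rw [h4] at h1
      exact tendsto_nhds_unique h1 h3
    exact Lp.ext (hyx.trans (hTcoe x).symm)
  let T' : H →L[ℂ] Lp ℂ 2 μ := ⟨T, hTcont⟩
  have hT'coe : ∀ x : H, ⇑(T' x) =ᵐ[μ] φ x := hTcoe
  -- inner products in L²
  have hinner : ∀ x y : H, (inner ℂ (T' x) (T' y) : ℂ)
      = ∫ g, (starRingEnd ℂ) (φ x g) * φ y g ∂μ := by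
    intro x y
    rw [L2.inner_def]
    apply integral_congr_ae
    filter_upwards [hT'coe x, hT'coe y] with g h1 h2
    rw [h1, h2, RCLike.inner_apply, mul_comm]
  have hBinv : ∀ (h : G) (x y : H),
      (inner ℂ (T' (π h x)) (T' (π h y)) : ℂ) = inner ℂ (T' x) (T' y) := by
    intro h x y
    rw [hinner, hinner]
    have h1 : (fun g => (starRingEnd ℂ) (φ (π h x) g) * φ (π h y) g)
        = fun g => (fun g' => (starRingEnd ℂ) (φ x g') * φ y g') (h⁻¹ * g) := by
      funext g; rw [hφeq, hφeq]
    rw [h1]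
    exact (measurePreserving_mul_left μ h⁻¹).integral_comp
      (MeasurableEquiv.mulLeft h⁻¹).measurableEmbedding
      (fun g' => (starRingEnd ℂ) (φ x g') * φ y g')
  -- the operator S = T'† ∘ T'
  let S : H →L[ℂ] H := ContinuousLinearMap.adjoint T' ∘L T'
  have hSinner : ∀ x y : H, (inner ℂ (S x) y : ℂ) = inner ℂ (T' x) (T' y) := fun x y =>
    ContinuousLinearMap.adjoint_inner_left T' y (T' x)
  have hSsa : IsSelfAdjoint S := by
    rw [ContinuousLinearMap.isSelfAdjoint_iff']
    show ContinuousLinearMap.adjoint (ContinuousLinearMap.adjoint T' ∘L T') = S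
    rw [ContinuousLinearMap.adjoint_comp, ContinuousLinearMap.adjoint_adjoint]
  have hπadj : ∀ h : G, ContinuousLinearMap.adjoint (π h) = π h⁻¹ := by
    intro h
    symm
    rw [ContinuousLinearMap.eq_adjoint_iff]
    intro x y
    calc (inner ℂ (π h⁻¹ x) y : ℂ) = inner ℂ (π h (π h⁻¹ x)) (π h y) := (hπu h _ _).symm
      _ = inner ℂ x (π h y) := by rw [hπone]
  have hcomm : ∀ h : G, π h * S = S * π h := by
    intro h
    refine ContinuousLinearMap.ext fun x => ?_
    refine ext_inner_right ℂ fun y => ?_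
    show (inner ℂ (π h (S x)) y : ℂ) = inner ℂ (S (π h x)) y
    calc (inner ℂ (π h (S x)) y : ℂ)
        = inner ℂ (π h (S x)) (π h (π h⁻¹ y)) := by rw [hπone]
      _ = inner ℂ (S x) (π h⁻¹ y) := hπu h _ _
      _ = inner ℂ (T' x) (T' (π h⁻¹ y)) := hSinner _ _
      _ = inner ℂ (T' (π h x)) (T' (π h (π h⁻¹ y))) := (hBinv h x _).symm
      _ = inner ℂ (T' (π h x)) (T' y) := by rw [hπone]
      _ = inner ℂ (S (π h x)) y := (hSinner _ _).symm
  obtain ⟨c, hc⟩ := schur_aux (fun g : G => π g) (fun g : G => π g⁻¹)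
    (fun g => by rw [← map_mul, mul_inv_cancel, map_one])
    (fun g => by rw [← map_mul, inv_mul_cancel, map_one])
    (fun g => by rw [ContinuousLinearMap.star_eq_adjoint, hπadj])
    hirr S hSsa hcomm
  have hSapp : ∀ x : H, S x = (c : ℂ) • x := by
    intro x
    rw [hc, Algebra.algebraMap_eq_smul_one]
    show c • (1 : H →L[ℂ] H) x = (c : ℂ) • x
    rw [ContinuousLinearMap.one_apply]
    exact (Complex.coe_smul c x).symm
  have hnorm : ∀ x : H, ‖T' x‖ ^ 2 = c * ‖x‖ ^ 2 := by
    intro x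
    have h1 : (inner ℂ (T' x) (T' x) : ℂ) = (c : ℂ) * inner ℂ x x := by
      rw [← hSinner, hSapp, inner_smul_left, Complex.conj_ofReal]
    rw [inner_self_eq_norm_sq_to_K, inner_self_eq_norm_sq_to_K] at h1
    exact Complex.ofReal_injective (by push_cast; exact h1)
  -- T' ξ is nonzero
  have hφξcont : Continuous (φ ξ) := Continuous.inner (hπc ξ) continuous_const
  have hTξ : T' ξ ≠ 0 := by
    intro h0
    have h1 : φ ξ =ᵐ[μ] (fun _ => 0 : G → ℂ) := by
      calc φ ξ =ᵐ[μ] ⇑(T' ξ) := (hT'coe ξ).symm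
        _ = ⇑(0 : Lp ℂ 2 μ) := by rw [h0]
        _ =ᵐ[μ] (fun _ => 0 : G → ℂ) := Lp.coeFn_zero ℂ 2 μ
    have h2 : φ ξ = fun _ => 0 :=
      (Continuous.ae_eq_iff_eq μ hφξcont continuous_const).mp h1
    have h3 : φ ξ 1 = 0 := by rw [h2]
    rw [hφdef] at h3
    simp only [map_one, ContinuousLinearMap.one_apply] at h3
    exact hξne (inner_self_eq_zero.mp h3)
  have hc0 : 0 < c := by
    have h1 := hnorm ξ
    have h2 : 0 < ‖T' ξ‖ := norm_pos_iff.mpr hTξ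
    have h3 : 0 < ‖ξ‖ := norm_pos_iff.mpr hξne
    nlinarith
  set s : ℝ := Real.sqrt c with hs
  have hs0 : 0 < s := Real.sqrt_pos.mpr hc0
  have hTnorm : ∀ x : H, ‖T' x‖ = s * ‖x‖ := by
    intro x
    have h1 : ‖T' x‖ = Real.sqrt (c * ‖x‖ ^ 2) := by
      rw [← hnorm x, Real.sqrt_sq (norm_nonneg _)]
    rw [h1, Real.sqrt_mul hc0.le, Real.sqrt_sq (norm_nonneg _)]
  let V : H →ₗᵢ[ℂ] Lp ℂ 2 μ :=
  { toLinearMap := ((s⁻¹ : ℝ) : ℂ) • T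
    norm_map' := by
      intro x
      show ‖((s⁻¹ : ℝ) : ℂ) • T x‖ = ‖x‖
      rw [norm_smul]
      have h1 : ‖((s⁻¹ : ℝ) : ℂ)‖ = s⁻¹ := by
        rw [Complex.norm_real, Real.norm_eq_abs, abs_of_nonneg (inv_nonneg.mpr hs0.le)]
      rw [h1, show ‖T x‖ = ‖T' x‖ from rfl, hTnorm]
      field_simp }
  refine ⟨V, ?_⟩
  have hVcoe : ∀ x : H, ⇑(V x) =ᵐ[μ] fun g => ((s⁻¹ : ℝ) : ℂ) * φ x g := by
    intro x
    have h1 : (V x : Lp ℂ 2 μ) = ((s⁻¹ : ℝ) : ℂ) • (T x) := rfl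
    rw [h1]
    calc ⇑(((s⁻¹ : ℝ) : ℂ) • T x) =ᵐ[μ] ((s⁻¹ : ℝ) : ℂ) • ⇑(T x) := Lp.coeFn_smul _ _
      _ =ᵐ[μ] fun g => ((s⁻¹ : ℝ) : ℂ) * φ x g := (hTcoe x).mono fun g hg => by
          simp only [Pi.smul_apply, hg, smul_eq_mul]
  intro h x
  have hA := hVcoe (π h x)
  have hB := (measurePreserving_mul_left μ h⁻¹).quasiMeasurePreserving.ae_eq_comp (hVcoe x)
  filter_upwards [hA, hB] with g h1 h2
  rw [h1, hφeq]
  exact h2.symm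
end

section
/- Let A, D be C*-algebras, E a Hilbert A-module, and suppose there are hereditary cones C_A ⊆ M(A)⁺, C_K ⊆ M(K(E))⁺ and a positive, strictly continuous, linear map Ψ : M(D) → M(K(E)) = B(E) which is nondegenerate (Ψ(D⁺)·K(E) is dense in K(E)) and maps a given dense hereditary cone C_D ⊆ D⁺ into C_K. If C_D is dense in D⁺, then C_K ∩ K(E)⁺ is dense in K(E)⁺. -/
open MultiplierAlgebra Filter Topology

section AuxMult
variable {A : Type*} [NonUnitalNormedRing A] [StarRing A] [CStarRing A]
    [NormedSpace ℂ A] [SMulCommClass ℂ A A] [IsScalarTower ℂ A A]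

omit [StarRing A] [CStarRing A] in
lemma aux_central_eq (m : 𝓜(ℂ, A)) (x y : A) : m.snd x * y = x * m.fst y := m.central x y

lemma aux_fst_mul (m : 𝓜(ℂ, A)) (a b : A) : m.fst (a * b) = m.fst a * b := by
  have key : ∀ x : A, x * m.fst (a * b) = x * (m.fst a * b) := fun x => by
    rw [← m.central, ← mul_assoc, m.central, mul_assoc]
  have h0 : star (m.fst (a * b) - m.fst a * b) * (m.fst (a * b) - m.fst a * b) = 0 := by
    rw [mul_sub, ← key, ← mul_sub]
    simp
  rw [← sub_eq_zero]
  exact (CStarRing.star_mul_self_eq_zero_iff _).mp h0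

lemma aux_coe_fst_apply (m : 𝓜(ℂ, A)) (k : A) :
    ((m.fst k : A) : 𝓜(ℂ, A)) = m * (k : 𝓜(ℂ, A)) := by
  ext : 1
  refine Prod.ext ?_ ?_
  · ext x
    show m.fst k * x = (m * (k : 𝓜(ℂ, A))).fst x
    rw [DoubleCentralizer.mul_fst]
    show m.fst k * x = m.fst (k * x)
    rw [aux_fst_mul]
  · ext x
    show x * m.fst k = (m * (k : 𝓜(ℂ, A))).snd x
    rw [DoubleCentralizer.mul_snd]
    show x * m.fst k = m.snd x * k
    rw [m.central]

variable [StarModule ℂ A] [NormedStarGroup A]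

lemma aux_coe_mul (a b : A) : ((a * b : A) : 𝓜(ℂ, A)) = (a : 𝓜(ℂ, A)) * (b : 𝓜(ℂ, A)) :=
  map_mul (DoubleCentralizer.coeHom (𝕜 := ℂ)) a b

lemma aux_coe_star (a : A) : ((star a : A) : 𝓜(ℂ, A)) = star (a : 𝓜(ℂ, A)) :=
  map_star (DoubleCentralizer.coeHom (𝕜 := ℂ)) a

lemma aux_coe_add (a b : A) : ((a + b : A) : 𝓜(ℂ, A)) = (a : 𝓜(ℂ, A)) + (b : 𝓜(ℂ, A)) :=
  map_add (DoubleCentralizer.coeHom (𝕜 := ℂ)) a b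

lemma aux_coe_csmul (c : ℂ) (a : A) : ((c • a : A) : 𝓜(ℂ, A)) = c • (a : 𝓜(ℂ, A)) :=
  map_smul (DoubleCentralizer.coeHom (𝕜 := ℂ)) c a

lemma aux_coe_zero : ((0 : A) : 𝓜(ℂ, A)) = 0 :=
  map_zero (DoubleCentralizer.coeHom (𝕜 := ℂ))

end AuxMult


set_option maxHeartbeats 1000000 in
/-- Integrability is inherited along nondegenerate, positive, strictly continuous maps:
given C*-algebras `D` and `K` (the latter playing the role of `K(E)` for a Hilbert module
`E`), a dense hereditary cone `C_D ⊆ D⁺`, a hereditary cone `C_K ⊆ M(K)⁺`, and a positive,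
strictly continuous linear map `Ψ : M(D) → M(K)` which is nondegenerate (the products
`Ψ(b) k` for `b ∈ D⁺`, `k ∈ K` span a dense subspace of `K`) and maps `C_D` into `C_K`,
the cone `C_K ∩ K⁺` is dense in `K⁺`. -/
theorem stmt19 {D : Type*} [NonUnitalNormedRing D] [StarRing D] [CStarRing D]
    [NormedSpace ℂ D] [SMulCommClass ℂ D D] [IsScalarTower ℂ D D]
    [StarModule ℂ D] [NormedStarGroup D] [CompleteSpace D]
    [PartialOrder D] [StarOrderedRing D]
    {K : Type*} [NonUnitalNormedRing K] [StarRing K] [CStarRing K]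
    [NormedSpace ℂ K] [SMulCommClass ℂ K K] [IsScalarTower ℂ K K]
    [StarModule ℂ K] [NormedStarGroup K] [CompleteSpace K]
    [PartialOrder K] [StarOrderedRing K]
    (C_D : Set D)
    (hposD : ∀ x ∈ C_D, 0 ≤ x)
    (haddD : ∀ x ∈ C_D, ∀ y ∈ C_D, x + y ∈ C_D)
    (hheredD : ∀ u v : D, 0 ≤ u → u ≤ v → v ∈ C_D → u ∈ C_D)
    (hdenseD : ∀ x : D, 0 ≤ x → x ∈ closure C_D)
    (C_K : Set 𝓜(ℂ, K))
    (hposK : ∀ m ∈ C_K, ∃ c : 𝓜(ℂ, K), m = star c * c)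
    (haddK : ∀ m ∈ C_K, ∀ m' ∈ C_K, m + m' ∈ C_K)
    (hsmulK : ∀ (r : ℝ), 0 ≤ r → ∀ m ∈ C_K, (r : ℂ) • m ∈ C_K)
    (hheredK : ∀ u v : 𝓜(ℂ, K), (∃ c, u = star c * c) → (∃ c, v - u = star c * c) →
      v ∈ C_K → u ∈ C_K)
    (Ψ : 𝓜(ℂ, D) →ₗ[ℂ] 𝓜(ℂ, K))
    (hΨpos : ∀ m : 𝓜(ℂ, D), (∃ c, m = star c * c) → ∃ c, Ψ m = star c * c)
    (hΨstrict : ∀ {ι : Type} [Nonempty ι] [SemilatticeSup ι]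
      (f : ι → 𝓜(ℂ, D)) (m : 𝓜(ℂ, D)),
      (∀ d : D, Tendsto (fun i => (f i).fst d) atTop (𝓝 (m.fst d)) ∧
        Tendsto (fun i => (f i).snd d) atTop (𝓝 (m.snd d))) →
      (∀ k : K, Tendsto (fun i => (Ψ (f i)).fst k) atTop (𝓝 ((Ψ m).fst k)) ∧
        Tendsto (fun i => (Ψ (f i)).snd k) atTop (𝓝 ((Ψ m).snd k))))
    (hΨnondeg : Dense ((Submodule.span ℂ
      {z : K | ∃ (b : D) (k : K), 0 ≤ b ∧ z = (Ψ (b : 𝓜(ℂ, D))).fst k} : Submodule ℂ K) : Set K))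
    (hΨC : ∀ b ∈ C_D, Ψ ((b : D) : 𝓜(ℂ, D)) ∈ C_K) :
    ∀ k : K, 0 ≤ k → k ∈ closure {k' : K | 0 ≤ k' ∧ ((k' : 𝓜(ℂ, K)) ∈ C_K)} := by
  letI : NonUnitalCStarAlgebra D := { }
  letI : NonUnitalCStarAlgebra K := { }
  letI : PartialOrder 𝓜(ℂ, K) := CStarAlgebra.spectralOrder _
  letI : StarOrderedRing 𝓜(ℂ, K) := CStarAlgebra.spectralOrderedRing _
  intro k₀ hk₀
  -- square root producing witnesses in the multiplier algebra
  have hsqM : ∀ m : 𝓜(ℂ, K), 0 ≤ m → ∃ c, m = star c * c := fun m hm =>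
    ⟨CFC.sqrt m, by
      rw [(IsSelfAdjoint.of_nonneg (CFC.sqrt_nonneg (a := m))).star_eq,
        CFC.sqrt_mul_sqrt_self m hm]⟩
  have hsqM' : ∀ m : 𝓜(ℂ, K), (∃ c, m = star c * c) → 0 ≤ m := by
    rintro m ⟨c, rfl⟩; exact star_mul_self_nonneg c
  have hRsmul : ∀ (r : ℝ), 0 ≤ r → ∀ m : 𝓜(ℂ, K), 0 ≤ m → 0 ≤ r • m := by
    intro r hr m hm
    obtain ⟨c, rfl⟩ := hsqM m hm
    rw [← Complex.coe_smul]
    have : ((r : ℝ) : ℂ) • (star c * c)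
        = star (((Real.sqrt r : ℝ) : ℂ) • c) * (((Real.sqrt r : ℝ) : ℂ) • c) := by
      rw [star_smul, RCLike.star_def, Complex.conj_ofReal, smul_mul_smul_comm,
        ← Complex.ofReal_mul, Real.mul_self_sqrt hr]
    rw [this]
    exact star_mul_self_nonneg _
  -- `0 ∈ C_K`
  obtain ⟨b₀, hb₀⟩ : C_D.Nonempty :=
    closure_nonempty_iff.mp ⟨0, hdenseD 0 le_rfl⟩
  have h0K : (0 : 𝓜(ℂ, K)) ∈ C_K := by
    simpa using hsmulK 0 le_rfl _ (hΨC b₀ hb₀)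
  -- positivity of Ψ on positive elements of D
  have hΨposM : ∀ b : D, 0 ≤ b → 0 ≤ Ψ ((b : D) : 𝓜(ℂ, D)) := by
    intro b hb
    refine hsqM' _ (hΨpos _ ⟨(CFC.sqrt b : D), ?_⟩)
    have h1 : b = star (CFC.sqrt b) * CFC.sqrt b := by
      rw [(IsSelfAdjoint.of_nonneg (CFC.sqrt_nonneg (a := b))).star_eq,
        CFC.sqrt_mul_sqrt_self b hb]
    calc ((b : D) : 𝓜(ℂ, D)) = ((star (CFC.sqrt b) * CFC.sqrt b : D) : 𝓜(ℂ, D)) := by rw [← h1]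
      _ = star ((CFC.sqrt b : D) : 𝓜(ℂ, D)) * ((CFC.sqrt b : D) : 𝓜(ℂ, D)) := by
          rw [aux_coe_mul, aux_coe_star]
  -- key hereditary step
  have hkey : ∀ m : 𝓜(ℂ, K), 0 ≤ m → m ∈ C_K → ∀ d : 𝓜(ℂ, K), 0 ≤ d →
      m * d * m ∈ C_K := by
    intro m hm hmC d hd
    have hmsa : IsSelfAdjoint m := .of_nonneg hm
    have hdsa : IsSelfAdjoint d := .of_nonneg hd
    have h1 : m * d * m ≤ ‖d‖ • (m * m) := by
      have := star_left_conjugate_le_conjugate (hdsa.le_algebraMap_norm_self) m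
      rw [hmsa.star_eq] at this
      refine this.trans_eq ?_
      rw [Algebra.algebraMap_eq_smul_one, mul_smul_comm, smul_mul_assoc, mul_one]
    have h2 : m * m ≤ ‖m‖ • m := by
      set s := CFC.sqrt m with hs_def
      have hs0 : (0 : 𝓜(ℂ, K)) ≤ s := CFC.sqrt_nonneg m
      have hssa : IsSelfAdjoint s := .of_nonneg hs0
      have hss : s * s = m := CFC.sqrt_mul_sqrt_self m hm
      have := star_left_conjugate_le_conjugate (hmsa.le_algebraMap_norm_self) s
      rw [hssa.star_eq] at this
      calc m * m = s * m * s := by rw [← hss]; noncomm_ring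
        _ ≤ s * algebraMap ℝ 𝓜(ℂ, K) ‖m‖ * s := this
        _ = ‖m‖ • m := by
            rw [Algebra.algebraMap_eq_smul_one, mul_smul_comm, smul_mul_assoc, mul_one, hss]
    have huv : m * d * m ≤ (‖d‖ * ‖m‖) • m := by
      refine h1.trans ?_
      rw [mul_smul, ← sub_nonneg, ← smul_sub]
      exact hRsmul _ (norm_nonneg d) _ (sub_nonneg.mpr h2)
    refine hheredK _ _ ?_ (hsqM _ (sub_nonneg.mpr huv)) ?_
    · refine hsqM _ ?_
      have := star_left_conjugate_nonneg hd m
      rwa [hmsa.star_eq] at this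
    · have := hsmulK (‖d‖ * ‖m‖) (by positivity) m hmC
      rwa [Complex.coe_smul] at this
  -- the cone of products over C_D
  set S1 : Set K := {z : K | ∃ b ∈ C_D, ∃ k : K, z = (Ψ ((b : D) : 𝓜(ℂ, D))).fst k} with hS1_def
  -- membership of x * star x for x in the span
  have hspan : ∀ x : K, x ∈ Submodule.span ℂ S1 →
      (((x * star x : K)) : 𝓜(ℂ, K)) ∈ C_K := by
    intro x hx
    induction hx using Submodule.span_induction with
    | mem z hz =>
      obtain ⟨b, hb, k, rfl⟩ := hz
      set m := Ψ ((b : D) : 𝓜(ℂ, D)) with hm_def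
      have hm : 0 ≤ m := hΨposM b (hposD b hb)
      have hmsa : IsSelfAdjoint m := .of_nonneg hm
      have hcoe : ((m.fst k * star (m.fst k) : K) : 𝓜(ℂ, K))
          = m * (((k : 𝓜(ℂ, K))) * star ((k : 𝓜(ℂ, K)))) * m := by
        rw [aux_coe_mul, aux_coe_star, aux_coe_fst_apply, star_mul, hmsa.star_eq]
        noncomm_ring
      rw [hcoe]
      exact hkey m hm (hΨC b hb) _ (mul_star_self_nonneg _)
    | zero => rw [zero_mul, aux_coe_zero]; exact h0K
    | add x y hx hy ihx ihy =>
      set X := ((x : K) : 𝓜(ℂ, K))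
      set Y := ((y : K) : 𝓜(ℂ, K))
      have hcx : ((x * star x : K) : 𝓜(ℂ, K)) = X * star X := by
        rw [aux_coe_mul, aux_coe_star]
      have hcy : ((y * star y : K) : 𝓜(ℂ, K)) = Y * star Y := by
        rw [aux_coe_mul, aux_coe_star]
      have hcxy : (((x + y) * star (x + y) : K) : 𝓜(ℂ, K)) = (X + Y) * star (X + Y) := by
        rw [aux_coe_mul, aux_coe_star, aux_coe_add]
      have hv : ((2 : ℂ) • (X * star X + Y * star Y)) ∈ C_K := by
        have h2 := hsmulK 2 (by norm_num) _ (haddK _ (hcx ▸ ihx) _ (hcy ▸ ihy))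
        have h2' : ((2 : ℝ) : ℂ) = (2 : ℂ) := by norm_num
        rwa [h2'] at h2
      rw [hcxy]
      refine hheredK _ _ ⟨star (X + Y), by rw [star_star]⟩ ⟨star (X - Y), ?_⟩ hv
      · rw [star_star, two_smul, star_add, star_sub]
        noncomm_ring
    | smul a x hx ihx =>
      have hmc : a * star a = ((Complex.normSq a : ℝ) : ℂ) := by
        rw [RCLike.star_def]
        exact_mod_cast Complex.mul_conj a
      have hc : ((a • x * star (a • x) : K) : 𝓜(ℂ, K))
          = ((Complex.normSq a : ℝ) : ℂ) • ((x * star x : K) : 𝓜(ℂ, K)) := by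
        rw [star_smul, smul_mul_smul_comm, hmc, aux_coe_csmul]
      rw [hc]
      exact hsmulK _ (Complex.normSq_nonneg a) _ ihx
  -- density of the span of S1
  have hS01 : {z : K | ∃ (b : D) (k : K), 0 ≤ b ∧ z = (Ψ ((b : D) : 𝓜(ℂ, D))).fst k}
      ⊆ closure (Submodule.span ℂ S1 : Set K) := by
    rintro z ⟨b, k, hb, rfl⟩
    obtain ⟨bs, hbs_mem, hbs_lim⟩ := mem_closure_iff_seq_limit.mp (hdenseD b hb)
    have hstrict : ∀ d : D,
        Tendsto (fun n => (((bs n : D) : 𝓜(ℂ, D)).fst d)) atTop (𝓝 (((b : D) : 𝓜(ℂ, D)).fst d)) ∧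
        Tendsto (fun n => (((bs n : D) : 𝓜(ℂ, D)).snd d)) atTop (𝓝 (((b : D) : 𝓜(ℂ, D)).snd d)) := by
      intro d
      constructor
      · show Tendsto (fun n => bs n * d) atTop (𝓝 (b * d))
        exact hbs_lim.mul tendsto_const_nhds
      · show Tendsto (fun n => d * bs n) atTop (𝓝 (d * b))
        exact tendsto_const_nhds.mul hbs_lim
    have hlim := (hΨstrict (ι := ℕ) (fun n => ((bs n : D) : 𝓜(ℂ, D))) ((b : D) : 𝓜(ℂ, D))
      hstrict k).1
    refine mem_closure_of_tendsto hlim (Eventually.of_forall fun n => ?_)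
    exact Submodule.subset_span ⟨bs n, hbs_mem n, k, rfl⟩
  have hdense1 : Dense ((Submodule.span ℂ S1 : Submodule ℂ K) : Set K) := by
    have hle : Submodule.span ℂ
        {z : K | ∃ (b : D) (k : K), 0 ≤ b ∧ z = (Ψ ((b : D) : 𝓜(ℂ, D))).fst k}
        ≤ (Submodule.span ℂ S1).topologicalClosure :=
      Submodule.span_le.mpr (fun z hz => by
        have := hS01 hz
        rwa [← Submodule.topologicalClosure_coe] at this)
    have hsub : ((Submodule.span ℂ
        {z : K | ∃ (b : D) (k : K), 0 ≤ b ∧ z = (Ψ ((b : D) : 𝓜(ℂ, D))).fst k} : Submodule ℂ K) : Set K)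
        ⊆ closure ((Submodule.span ℂ S1 : Submodule ℂ K) : Set K) := by
      intro z hz
      have := hle hz
      rwa [← Submodule.topologicalClosure_coe]
    exact (hΨnondeg.mono hsub).of_closure
  -- conclusion via the square root of `k₀`
  have hc₀nn : (0 : K) ≤ CFC.sqrt k₀ := CFC.sqrt_nonneg k₀
  have hc₀sa : star (CFC.sqrt k₀) = CFC.sqrt k₀ := (IsSelfAdjoint.of_nonneg hc₀nn).star_eq
  have hc₀sq : CFC.sqrt k₀ * CFC.sqrt k₀ = k₀ := CFC.sqrt_mul_sqrt_self k₀ hk₀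
  obtain ⟨xs, hxs_mem, hxs_lim⟩ := mem_closure_iff_seq_limit.mp (hdense1 (CFC.sqrt k₀))
  have hstar : Tendsto (fun n => star (xs n)) atTop (𝓝 (star (CFC.sqrt k₀))) :=
    (continuous_star.tendsto _).comp hxs_lim
  have hlim : Tendsto (fun n => xs n * star (xs n)) atTop (𝓝 k₀) := by
    have := hxs_lim.mul hstar
    rwa [hc₀sa, hc₀sq] at this
  exact mem_closure_of_tendsto hlim
    (Eventually.of_forall fun n => ⟨mul_star_self_nonneg _, hspan _ (hxs_mem n)⟩)
end
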